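/- Let K be an imaginary quadratic field with fundamental discriminant D, let c be a positive odd integer coprime to D such that (D/p) = 1 for every prime p dividing c, and let d be a positive squarefree divisor of |D|. Suppose that (−cD/d is a quadratic residue mod p) for every odd prime p dividing d, and that (cd is a quadratic residue mod p) for every odd prime p dividing (−D)/d. Then the Diophantine equation d·c·z² = x² − D·y² has a solution in integers x, y, z with z ≠ 0. -/

import Mathlib

lemma zmod2_isSquare (x : ZMod 2) : IsSquare x := by
  revert x; decide

lemma isSquare_of_mul_sq {p : ℕ} [Fact p.Prime] (w u : ZMod p) (hu : u ≠ 0)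
    (h : IsSquare (w * u ^ 2)) : IsSquare w := by
  obtain ⟨r, hr⟩ := h
  exact ⟨r * u⁻¹, by field_simp; rw [hr]; ring⟩

lemma lift_factor {p : ℕ} [NeZero p] (a b c : ℕ)
    (A B C A' B' C' : ZMod p)
    (h : ∀ X Y Z : ZMod p, (a : ZMod p) * X ^ 2 + (b : ZMod p) * Y ^ 2 - (c : ZMod p) * Z ^ 2
      = (A * X + B * Y + C * Z) * (A' * X + B' * Y + C' * Z)) :
    ∃ α β γ α' β' γ' : ℤ, ∀ x y z : ℤ,
      (p : ℤ) ∣ ((a : ℤ) * x ^ 2 + (b : ℤ) * y ^ 2 - (c : ℤ) * z ^ 2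
        - (α * x + β * y + γ * z) * (α' * x + β' * y + γ' * z)) := by
  refine ⟨A.val, B.val, C.val, A'.val, B'.val, C'.val, fun x y z => ?_⟩
  rw [← ZMod.intCast_zmod_eq_zero_iff_dvd]
  push_cast
  simp only [ZMod.natCast_val, ZMod.cast_id]
  linear_combination h (x : ZMod p) (y : ZMod p) (z : ZMod p)

lemma not_dvd_of_sf {a b p : ℕ} (pp : p.Prime) (hsf : Squarefree (a * b))
    (ha : p ∣ a) (hb : p ∣ b) : False :=
  pp.not_isUnit (hsf p (mul_dvd_mul ha hb))

lemma factor_prime (a b c : ℕ) (p : ℕ) (pp : p.Prime) (hdvd : p ∣ a * b * c)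
    (hsf : Squarefree (a * b * c))
    (hA : p ∣ a → IsSquare ((b * c : ℕ) : ZMod p))
    (hB : p ∣ b → IsSquare ((a * c : ℕ) : ZMod p))
    (hC : p ∣ c → IsSquare ((-(a * b : ℤ)) : ZMod p)) :
    ∃ α β γ α' β' γ' : ℤ, ∀ x y z : ℤ,
      (p : ℤ) ∣ ((a : ℤ) * x ^ 2 + (b : ℤ) * y ^ 2 - (c : ℤ) * z ^ 2
        - (α * x + β * y + γ * z) * (α' * x + β' * y + γ' * z)) := by
  haveI : Fact p.Prime := ⟨pp⟩
  have hsf_ab : Squarefree (a * b) := hsf.squarefree_of_dvd (dvd_mul_right _ _)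
  have hsf_ac : Squarefree (a * c) := hsf.squarefree_of_dvd
    (by rw [mul_comm a b, mul_assoc]; exact dvd_mul_left _ _)
  have hsf_bc : Squarefree (b * c) := hsf.squarefree_of_dvd
    (by rw [mul_assoc]; exact dvd_mul_left _ _)
  rcases (pp.dvd_mul.mp hdvd) with hab | hc
  · rcases (pp.dvd_mul.mp hab) with ha | hb
    · -- p ∣ a : q ≡ b y² - c z², factor using s² = bc
      obtain ⟨s, hs⟩ := hA ha
      have hb0 : (b : ZMod p) ≠ 0 := fun h => not_dvd_of_sf pp hsf_ab ha
        ((ZMod.natCast_eq_zero_iff _ _).mp h)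
      have ha0 : (a : ZMod p) = 0 := (ZMod.natCast_eq_zero_iff _ _).mpr ha
      have hs' : s * s = (b : ZMod p) * (c : ZMod p) := by
        rw [← hs]; push_cast; ring
      refine lift_factor a b c 0 (b : ZMod p) (-s) 0 1 ((b : ZMod p)⁻¹ * s) fun X Y Z => ?_
      rw [ha0]
      field_simp
      linear_combination ((Z:ZMod p)^2) * hs'
    · -- p ∣ b : q ≡ a x² - c z², factor using s² = ac
      obtain ⟨s, hs⟩ := hB hb
      have ha0 : (a : ZMod p) ≠ 0 := fun h => not_dvd_of_sf pp hsf_ab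
        ((ZMod.natCast_eq_zero_iff _ _).mp h) hb
      have hb0 : (b : ZMod p) = 0 := (ZMod.natCast_eq_zero_iff _ _).mpr hb
      have hs' : s * s = (a : ZMod p) * (c : ZMod p) := by
        rw [← hs]; push_cast; ring
      refine lift_factor a b c (a : ZMod p) 0 (-s) 1 0 ((a : ZMod p)⁻¹ * s) fun X Y Z => ?_
      rw [hb0]
      field_simp
      linear_combination ((Z:ZMod p)^2) * hs'
  · -- p ∣ c : q ≡ a x² + b y², factor using s² = -ab
    obtain ⟨s, hs⟩ := hC hc
    have ha0 : (a : ZMod p) ≠ 0 := fun h => not_dvd_of_sf pp hsf_ac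
      ((ZMod.natCast_eq_zero_iff _ _).mp h) hc
    have hc0 : (c : ZMod p) = 0 := (ZMod.natCast_eq_zero_iff _ _).mpr hc
    have hs' : s * s = -((a : ZMod p) * (b : ZMod p)) := by
      have := hs.symm
      push_cast at this
      rw [this]
    refine lift_factor a b c (a : ZMod p) (-s) 0 1 ((a : ZMod p)⁻¹ * s) 0 fun X Y Z => ?_
    rw [hc0]
    field_simp
    linear_combination ((Y:ZMod p)^2) * hs'

def FF (a b c : ℕ) (n : ℕ) : Prop :=
  ∃ α β γ α' β' γ' : ℤ, ∀ x y z : ℤ,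
    (n : ℤ) ∣ ((a : ℤ) * x ^ 2 + (b : ℤ) * y ^ 2 - (c : ℤ) * z ^ 2
      - (α * x + β * y + γ * z) * (α' * x + β' * y + γ' * z))

lemma crt2 (m n A B : ℤ) (h : IsCoprime m n) : ∃ x : ℤ, m ∣ x - A ∧ n ∣ x - B := by
  obtain ⟨u, v, huv⟩ := h
  refine ⟨A * (v * n) + B * (u * m), ⟨u * (B - A), ?_⟩, ⟨v * (A - B), ?_⟩⟩
  · linear_combination A * huv
  · linear_combination B * huv

lemma ff_one (a b c : ℕ) : FF a b c 1 :=
  ⟨0, 0, 0, 0, 0, 0, fun x y z => by simp⟩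

lemma dvd_form_sub {m Qv α β γ α' β' γ' α₁ β₁ γ₁ α₁' β₁' γ₁' : ℤ} (x y z : ℤ)
    (h : m ∣ Qv - (α₁ * x + β₁ * y + γ₁ * z) * (α₁' * x + β₁' * y + γ₁' * z))
    (hα : m ∣ α - α₁) (hβ : m ∣ β - β₁) (hγ : m ∣ γ - γ₁)
    (hα' : m ∣ α' - α₁') (hβ' : m ∣ β' - β₁') (hγ' : m ∣ γ' - γ₁') :
    m ∣ Qv - (α * x + β * y + γ * z) * (α' * x + β' * y + γ' * z) := by
  have e1 : m ∣ (α - α₁) * x + (β - β₁) * y + (γ - γ₁) * z :=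
    dvd_add (dvd_add (hα.mul_right x) (hβ.mul_right y)) (hγ.mul_right z)
  have e2 : m ∣ (α' - α₁') * x + (β' - β₁') * y + (γ' - γ₁') * z :=
    dvd_add (dvd_add (hα'.mul_right x) (hβ'.mul_right y)) (hγ'.mul_right z)
  have key : Qv - (α * x + β * y + γ * z) * (α' * x + β' * y + γ' * z)
      = (Qv - (α₁ * x + β₁ * y + γ₁ * z) * (α₁' * x + β₁' * y + γ₁' * z))
        - ((α - α₁) * x + (β - β₁) * y + (γ - γ₁) * z) * (α' * x + β' * y + γ' * z)
        - (α₁ * x + β₁ * y + γ₁ * z) * ((α' - α₁') * x + (β' - β₁') * y + (γ' - γ₁') * z) := by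
    ring
  rw [key]
  exact dvd_sub (dvd_sub h (e1.mul_right _)) (e2.mul_left _)

lemma ff_mul (a b c m n : ℕ) (h : Nat.Coprime m n) (hm : FF a b c m) (hn : FF a b c n) :
    FF a b c (m * n) := by
  have hco : IsCoprime (m : ℤ) (n : ℤ) := Int.isCoprime_iff_gcd_eq_one.mpr (by simpa using h)
  obtain ⟨α₁, β₁, γ₁, α₁', β₁', γ₁', h₁⟩ := hm
  obtain ⟨α₂, β₂, γ₂, α₂', β₂', γ₂', h₂⟩ := hn
  obtain ⟨α, hα₁, hα₂⟩ := crt2 _ _ α₁ α₂ hco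
  obtain ⟨β, hβ₁, hβ₂⟩ := crt2 _ _ β₁ β₂ hco
  obtain ⟨γ, hγ₁, hγ₂⟩ := crt2 _ _ γ₁ γ₂ hco
  obtain ⟨α', hα₁', hα₂'⟩ := crt2 _ _ α₁' α₂' hco
  obtain ⟨β', hβ₁', hβ₂'⟩ := crt2 _ _ β₁' β₂' hco
  obtain ⟨γ', hγ₁', hγ₂'⟩ := crt2 _ _ γ₁' γ₂' hco
  refine ⟨α, β, γ, α', β', γ', fun x y z => ?_⟩
  push_cast
  exact hco.mul_dvd
    (dvd_form_sub x y z (h₁ x y z) hα₁ hβ₁ hγ₁ hα₁' hβ₁' hγ₁')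
    (dvd_form_sub x y z (h₂ x y z) hα₂ hβ₂ hγ₂ hα₂' hβ₂' hγ₂')

lemma ff_all (a b c : ℕ) (habc : 0 < a * b * c) (hsf : Squarefree (a * b * c))
    (hA : ∀ p : ℕ, p.Prime → p ∣ a → IsSquare ((b * c : ℕ) : ZMod p))
    (hB : ∀ p : ℕ, p.Prime → p ∣ b → IsSquare ((a * c : ℕ) : ZMod p))
    (hC : ∀ p : ℕ, p.Prime → p ∣ c → IsSquare ((-(a * b : ℤ)) : ZMod p)) :
    FF a b c (a * b * c) := by
  suffices H : ∀ n : ℕ, n ∣ a * b * c → FF a b c n from H _ dvd_rfl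
  intro n
  induction n using Nat.strong_induction_on with
  | _ n ih =>
    intro hdvd
    rcases eq_or_ne n 1 with rfl | hn1
    · exact ff_one a b c
    have hn0 : n ≠ 0 := by
      rintro rfl
      exact habc.ne' (Nat.eq_zero_of_zero_dvd hdvd)
    have hp : n.minFac.Prime := Nat.minFac_prime hn1
    have hpn : n.minFac ∣ n := Nat.minFac_dvd n
    have hrec : n = n.minFac * (n / n.minFac) := (Nat.mul_div_cancel' hpn).symm
    have hndvd : n / n.minFac ∣ a * b * c := dvd_trans (Nat.div_dvd_of_dvd hpn) hdvd
    have hlt : n / n.minFac < n := Nat.div_lt_self (Nat.pos_of_ne_zero hn0) hp.one_lt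
    have hsn : Squarefree n := hsf.squarefree_of_dvd hdvd
    have hcop : Nat.Coprime n.minFac (n / n.minFac) := by
      rw [Nat.Prime.coprime_iff_not_dvd hp]
      intro hcon
      exact hp.not_isUnit (hsn n.minFac (by
        conv_rhs => rw [hrec]
        exact mul_dvd_mul_left n.minFac hcon))
    rw [hrec]
    have hpabc : n.minFac ∣ a * b * c := hpn.trans hdvd
    exact ff_mul a b c _ _ hcop
      (factor_prime a b c n.minFac hp hpabc hsf (hA _ hp) (hB _ hp) (hC _ hp))
      (ih _ hlt hndvd)

lemma sf_eq_one_of_sq {n : ℕ} (hsf : Squarefree n) {z : ℤ} (h : z ^ 2 = (n : ℤ)) : n = 1 := by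
  have h2 : z.natAbs ^ 2 = n := by
    simpa [Int.natAbs_pow] using congrArg Int.natAbs h
  have hu : IsUnit z.natAbs := hsf _ (by rw [← h2, pow_two])
  rw [← h2, Nat.isUnit_iff.mp hu, one_pow]

set_option maxHeartbeats 2000000 in
lemma legendre (a b c : ℕ) (ha : 0 < a) (hb : 0 < b) (hc : 0 < c)
    (hsf : Squarefree (a * b * c))
    (hA : ∀ p : ℕ, p.Prime → p ∣ a → IsSquare ((b * c : ℕ) : ZMod p))
    (hB : ∀ p : ℕ, p.Prime → p ∣ b → IsSquare ((a * c : ℕ) : ZMod p))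
    (hC : ∀ p : ℕ, p.Prime → p ∣ c → IsSquare ((-(a * b : ℤ)) : ZMod p)) :
    ∃ x y z : ℤ, z ≠ 0 ∧ (a : ℤ) * x ^ 2 + (b : ℤ) * y ^ 2 = (c : ℤ) * z ^ 2 := by
  by_cases hab : a = 1 ∧ b = 1
  · -- sum of two squares case
    obtain ⟨rfl, rfl⟩ := hab
    rw [one_mul, one_mul] at hsf
    have key : ∃ u v : ℕ, c = u ^ 2 + v ^ 2 := by
      rw [Nat.eq_sq_add_sq_iff]
      intro q hq hq3
      by_cases hqc : q ∣ c
      · haveI : Fact q.Prime := ⟨Nat.prime_of_mem_primeFactors hq⟩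
        have := hC q (Nat.prime_of_mem_primeFactors hq) hqc
        have : IsSquare (-1 : ZMod q) := by simpa using this
        exact absurd (ZMod.exists_sq_eq_neg_one_iff.mp this) (by simp [hq3])
      · simp [padicValNat.eq_zero_of_not_dvd hqc]
    obtain ⟨u, v, huv⟩ := key
    exact ⟨u, v, 1, one_ne_zero, by push_cast [huv]; ring⟩
  · -- pigeonhole case
    obtain ⟨α, β, γ, α', β', γ', hF⟩ := ff_all a b c (by positivity) hsf hA hB hC
    set N := a * b * c with hNdef
    have hN : 0 < N := by positivity
    haveI : NeZero N := ⟨hN.ne'⟩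
    rw [hNdef] at hsf
    set s₁ := Nat.sqrt (b * c)
    set s₂ := Nat.sqrt (a * c)
    set s₃ := Nat.sqrt (a * b)
    set S : Finset (ℕ × ℕ × ℕ) :=
      Finset.range (s₁ + 1) ×ˢ Finset.range (s₂ + 1) ×ˢ Finset.range (s₃ + 1) with hSdef
    have hcard : N < S.card := by
      have e : S.card = (s₁ + 1) * ((s₂ + 1) * (s₃ + 1)) := by
        simp [hSdef, Finset.card_product]
      rw [e]
      have h1 : b * c < (s₁ + 1) ^ 2 := Nat.lt_succ_sqrt' _
      have h2 : a * c < (s₂ + 1) ^ 2 := Nat.lt_succ_sqrt' _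
      have h3 : a * b < (s₃ + 1) ^ 2 := Nat.lt_succ_sqrt' _
      have hsq : N ^ 2 < ((s₁ + 1) * ((s₂ + 1) * (s₃ + 1))) ^ 2 := by
        calc N ^ 2 = (b * c) * ((a * c) * (a * b)) := by rw [hNdef]; ring
        _ < (s₁ + 1) ^ 2 * ((s₂ + 1) ^ 2 * (s₃ + 1) ^ 2) := by
            apply Nat.mul_lt_mul_of_lt_of_le h1
            · exact Nat.mul_le_mul h2.le h3.le
            · positivity
        _ = ((s₁ + 1) * ((s₂ + 1) * (s₃ + 1))) ^ 2 := by ring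
      exact lt_of_pow_lt_pow_left₀ 2 (by positivity) hsq
    have hmaps : ∀ t ∈ S, ((α * t.1 + β * t.2.1 + γ * t.2.2 : ℤ) : ZMod N) ∈
        (Finset.univ : Finset (ZMod N)) := fun _ _ => Finset.mem_univ _
    have hcard' : (Finset.univ : Finset (ZMod N)).card < S.card := by
      rwa [Finset.card_univ, ZMod.card]
    obtain ⟨t₁, ht₁, t₂, ht₂, htne, hteq⟩ :=
      Finset.exists_ne_map_eq_of_card_lt_of_maps_to hcard' hmaps
    set x : ℤ := (t₁.1 : ℤ) - t₂.1 with hxdef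
    set y : ℤ := (t₁.2.1 : ℤ) - t₂.2.1 with hydef
    set z : ℤ := (t₁.2.2 : ℤ) - t₂.2.2 with hzdef
    have hvne : ¬(x = 0 ∧ y = 0 ∧ z = 0) := by
      rintro ⟨hx, hy, hz⟩
      apply htne
      have e1 : t₁.1 = t₂.1 := by
        have := sub_eq_zero.mp hx; exact_mod_cast this
      have e2 : t₁.2.1 = t₂.2.1 := by
        have := sub_eq_zero.mp hy; exact_mod_cast this
      have e3 : t₁.2.2 = t₂.2.2 := by
        have := sub_eq_zero.mp hz; exact_mod_cast this
      exact Prod.ext e1 (Prod.ext e2 e3)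
    have hL : (N : ℤ) ∣ α * x + β * y + γ * z := by
      have : ((α * t₁.1 + β * t₁.2.1 + γ * t₁.2.2 : ℤ) - (α * t₂.1 + β * t₂.2.1 + γ * t₂.2.2 : ℤ)
          : ZMod N) = 0 := by
        push_cast
        rw [sub_eq_zero]
        exact_mod_cast hteq
      have hdvd := (ZMod.intCast_zmod_eq_zero_iff_dvd _ _).mp (by exact_mod_cast this)
      convert hdvd using 1
      rw [hxdef, hydef, hzdef]; ring
    have hQ : (N : ℤ) ∣ (a : ℤ) * x ^ 2 + (b : ℤ) * y ^ 2 - (c : ℤ) * z ^ 2 := by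
      have h2 := (hL.mul_right (α' * x + β' * y + γ' * z))
      have := dvd_add (hF x y z) h2
      convert this using 1
      · rfl
      ring
    -- bounds
    have bound : ∀ (u₁ u₂ m : ℕ), u₁ < Nat.sqrt m + 1 → u₂ < Nat.sqrt m + 1 →
        ((u₁ : ℤ) - u₂) ^ 2 ≤ (m : ℤ) := by
      intro u₁ u₂ m h₁ h₂
      have hs : (Nat.sqrt m : ℤ) ^ 2 ≤ (m : ℤ) := by exact_mod_cast Nat.sqrt_le' m
      have l1 : ((u₁ : ℤ) - u₂) ≤ Nat.sqrt m := by
        have : (u₁ : ℤ) ≤ Nat.sqrt m := by exact_mod_cast Nat.lt_succ_iff.mp h₁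
        have h0 : (0 : ℤ) ≤ u₂ := Int.natCast_nonneg _
        linarith
      have l2 : -(Nat.sqrt m : ℤ) ≤ ((u₁ : ℤ) - u₂) := by
        have : (u₂ : ℤ) ≤ Nat.sqrt m := by exact_mod_cast Nat.lt_succ_iff.mp h₂
        have h0 : (0 : ℤ) ≤ u₁ := Int.natCast_nonneg _
        linarith
      calc ((u₁ : ℤ) - u₂) ^ 2 ≤ (Nat.sqrt m : ℤ) ^ 2 := sq_le_sq' l2 l1
      _ ≤ m := hs
    simp only [hSdef, Finset.mem_product, Finset.mem_range] at ht₁ ht₂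
    have hx2 : x ^ 2 ≤ ((b : ℤ) * c) := by
      have := bound t₁.1 t₂.1 (b * c) ht₁.1 ht₂.1
      push_cast at this ⊢; exact this
    have hy2 : y ^ 2 ≤ ((a : ℤ) * c) := by
      have := bound t₁.2.1 t₂.2.1 (a * c) ht₁.2.1 ht₂.2.1
      push_cast at this ⊢; exact this
    have hz2 : z ^ 2 ≤ ((a : ℤ) * b) := by
      have := bound t₁.2.2 t₂.2.2 (a * b) ht₁.2.2 ht₂.2.2
      push_cast at this ⊢; exact this
    obtain ⟨k, hk⟩ := hQ
    have haZ : (1 : ℤ) ≤ (a : ℤ) := by exact_mod_cast ha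
    have hbZ : (1 : ℤ) ≤ (b : ℤ) := by exact_mod_cast hb
    have hcZ : (1 : ℤ) ≤ (c : ℤ) := by exact_mod_cast hc
    have hNZ : ((N : ℕ) : ℤ) = (a : ℤ) * b * c := by push_cast [hNdef]; ring
    have hk2 : (a : ℤ) * x ^ 2 + (b : ℤ) * y ^ 2 - (c : ℤ) * z ^ 2 = (a : ℤ) * b * c * k := by
      rw [hk, hNZ]
    clear hk hF hL hteq
    have habc : (0 : ℤ) < (a : ℤ) * b * c := by positivity
    have hxsq : (0 : ℤ) ≤ x ^ 2 := sq_nonneg x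
    have hysq : (0 : ℤ) ≤ y ^ 2 := sq_nonneg y
    have hzsq : (0 : ℤ) ≤ z ^ 2 := sq_nonneg z
    have hax : (a : ℤ) * x ^ 2 ≤ (a : ℤ) * b * c := by
      linarith [mul_nonneg (by linarith : (0:ℤ) ≤ (a:ℤ)) (sub_nonneg.mpr hx2)]
    have hby : (b : ℤ) * y ^ 2 ≤ (a : ℤ) * b * c := by
      linarith [mul_nonneg (by linarith : (0:ℤ) ≤ (b:ℤ)) (sub_nonneg.mpr hy2)]
    have hcz : (c : ℤ) * z ^ 2 ≤ (a : ℤ) * b * c := by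
      linarith [mul_nonneg (by linarith : (0:ℤ) ≤ (c:ℤ)) (sub_nonneg.mpr hz2)]
    have haxp : (0 : ℤ) ≤ (a : ℤ) * x ^ 2 := by positivity
    have hbyp : (0 : ℤ) ≤ (b : ℤ) * y ^ 2 := by positivity
    have hczp : (0 : ℤ) ≤ (c : ℤ) * z ^ 2 := by positivity
    have hklb : -1 ≤ k := le_of_mul_le_mul_left (by linarith) habc
    have hkub : k ≤ 2 := le_of_mul_le_mul_left (by linarith) habc
    have sqz : ∀ w e : ℤ, 1 ≤ e → e * w ^ 2 ≤ 0 → w = 0 := by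
      intro w e he h
      have h1 : w ^ 2 ≤ e * w ^ 2 := le_mul_of_one_le_left (sq_nonneg w) he
      have h2 : w ^ 2 = 0 := le_antisymm (by linarith) (sq_nonneg w)
      exact pow_eq_zero_iff (two_ne_zero) |>.mp h2
    interval_cases k
    · -- k = -1 : forces a = b = 1, contradiction
      exfalso
      have hx0 : x = 0 := sqz x a haZ (by linarith)
      have hy0 : y = 0 := sqz y b hbZ (by linarith)
      have h3 : (c : ℤ) * z ^ 2 = (c : ℤ) * ((a : ℤ) * b) := by
        linear_combination (-1 : ℤ) * hk2 + (a : ℤ) * x * hx0 + (b : ℤ) * y * hy0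
      have hzab : z ^ 2 = ((a * b : ℕ) : ℤ) :=
        mul_left_cancel₀ (by exact_mod_cast hc.ne' : (c : ℤ) ≠ 0) (by push_cast; linarith [h3])
      have hab1 : a * b = 1 := sf_eq_one_of_sq
        (hsf.squarefree_of_dvd (dvd_mul_right _ _)) hzab
      exact hab ⟨Nat.eq_one_of_mul_eq_one_right hab1, Nat.eq_one_of_mul_eq_one_left hab1⟩
    · -- k = 0 : direct solution
      have heq : (a : ℤ) * x ^ 2 + (b : ℤ) * y ^ 2 = (c : ℤ) * z ^ 2 := by linarith
      refine ⟨x, y, z, ?_, heq⟩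
      intro hz0
      apply hvne
      have hcz0 : (c : ℤ) * z ^ 2 = 0 := by rw [hz0]; ring
      have hx0 : x = 0 := sqz x a haZ (by linarith)
      have hy0 : y = 0 := sqz y b hbZ (by linarith)
      exact ⟨hx0, hy0, hz0⟩
    · -- k = 1 : composition identity
      refine ⟨x * z + (b : ℤ) * y, y * z - (a : ℤ) * x, z ^ 2 + (a : ℤ) * b, by positivity, ?_⟩
      linear_combination (z ^ 2 + (a : ℤ) * b) * hk2
    · -- k = 2 : forces a = b = c = 1, contradiction
      exfalso
      have hz0 : z = 0 := sqz z c hcZ (by linarith)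
      have hcz0 : (c : ℤ) * z ^ 2 = 0 := by rw [hz0]; ring
      have hax_eq : (a : ℤ) * x ^ 2 = (a : ℤ) * ((b * c : ℕ) : ℤ) := by
        push_cast; linarith
      have hby_eq : (b : ℤ) * y ^ 2 = (b : ℤ) * ((a * c : ℕ) : ℤ) := by
        push_cast; linarith
      have hxbc : x ^ 2 = ((b * c : ℕ) : ℤ) :=
        mul_left_cancel₀ (by exact_mod_cast ha.ne' : (a : ℤ) ≠ 0) hax_eq
      have hyac : y ^ 2 = ((a * c : ℕ) : ℤ) :=
        mul_left_cancel₀ (by exact_mod_cast hb.ne' : (b : ℤ) ≠ 0) hby_eq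
      have hbc1 : b * c = 1 := sf_eq_one_of_sq
        (hsf.squarefree_of_dvd (by rw [mul_assoc]; exact dvd_mul_left _ _)) hxbc
      have hac1 : a * c = 1 := sf_eq_one_of_sq
        (hsf.squarefree_of_dvd (by rw [mul_comm a b, mul_assoc]; exact dvd_mul_left _ _)) hyac
      exact hab ⟨Nat.eq_one_of_mul_eq_one_right hac1, Nat.eq_one_of_mul_eq_one_right hbc1⟩

/-- `D` is a fundamental discriminant: either `D ≡ 1 (mod 4)` and `D` is squarefree, or
`D = 4m` with `m` squarefree and `m ≡ 2` or `3 (mod 4)`. -/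
def IsFundamentalDiscriminant (D : ℤ) : Prop :=
  (D % 4 = 1 ∧ Squarefree D) ∨
  (∃ m : ℤ, D = 4 * m ∧ Squarefree m ∧ (m % 4 = 2 ∨ m % 4 = 3))

lemma no_odd_sq {D : ℤ} (hDfund : IsFundamentalDiscriminant D) {p : ℕ}
    (pp : p.Prime) (hp2 : p ≠ 2) (h : p * p ∣ D.natAbs) : False := by
  rcases hDfund with ⟨-, hsf⟩ | ⟨m, rfl, hsfm, -⟩
  · have hsf' : Squarefree D.natAbs := Int.squarefree_natAbs.mpr hsf
    exact pp.not_isUnit (hsf' p h)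
  · have habs : (4 * m).natAbs = 4 * m.natAbs := by
      rw [Int.natAbs_mul]; rfl
    rw [habs] at h
    have hcop : Nat.Coprime p 4 := by
      refine Nat.coprime_of_dvd fun k hk hkp hk4 => ?_
      have hk2 : k = 2 := (Nat.prime_dvd_prime_iff_eq hk Nat.prime_two).mp
        (hk.dvd_of_dvd_pow (n := 2) (by simpa using hk4))
      have : k = p := (Nat.prime_dvd_prime_iff_eq hk pp).mp hkp
      exact hp2 (by omega)
    have hcop2 : Nat.Coprime (p * p) 4 := Nat.Coprime.mul hcop hcop
    have : p * p ∣ m.natAbs := hcop2.dvd_of_dvd_mul_left h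
    exact pp.not_isUnit (Int.squarefree_natAbs.mpr hsfm p this)

/-- under the local conditions (1) and (2), the Diophantine equation
`d·c·z² = x² − D·y²` has an integer solution with `z ≠ 0`. -/
theorem stmt_7 (D : ℤ) (hDneg : D < 0) (hDfund : IsFundamentalDiscriminant D)
    (c : ℕ) (hcpos : 0 < c) (hcodd : Odd c) (hccop : IsCoprime (c : ℤ) D)
    (hcsq : ∀ q : ℕ, q.Prime → q ∣ c → IsSquare ((D : ZMod q)))
    (d : ℕ) (hdpos : 0 < d) (hdsf : Squarefree d) (hdvd : (d : ℤ) ∣ D)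
    (h1 : ∀ p : ℕ, p.Prime → p ≠ 2 → (p : ℤ) ∣ (d : ℤ) →
      IsSquare (((-(c : ℤ) * D / (d : ℤ)) : ℤ) : ZMod p))
    (h2 : ∀ p : ℕ, p.Prime → p ≠ 2 → (p : ℤ) ∣ (-D / (d : ℤ)) →
      IsSquare ((((c : ℤ) * (d : ℤ)) : ℤ) : ZMod p)) :
    ∃ x y z : ℤ, z ≠ 0 ∧ (d : ℤ) * (c : ℤ) * z ^ 2 = x ^ 2 - D * y ^ 2 := by
  -- setup: n = |D| = d * e
  set n := D.natAbs with hndef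
  have hnD : (n : ℤ) = -D := by
    rw [hndef, Int.ofNat_natAbs_of_nonpos hDneg.le]
  have hnpos : 0 < n := by
    rw [hndef, Int.natAbs_pos]; exact hDneg.ne
  have hdn : d ∣ n := by
    rw [← Int.natCast_dvd_natCast]
    rw [hnD]
    exact (dvd_neg).mpr hdvd
  set e := n / d with hedef
  have hde : d * e = n := Nat.mul_div_cancel' hdn
  have hepos : 0 < e := by
    rcases Nat.eq_zero_or_pos e with h | h
    · rw [h, mul_zero] at hde; omega
    · exact h
  have hd0 : (d : ℤ) ≠ 0 := by exact_mod_cast hdpos.ne'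
  have hDde : D = -((d : ℤ) * (e : ℤ)) := by
    have : ((d * e : ℕ) : ℤ) = -D := by rw [hde, hnD]
    push_cast at this
    linarith
  -- square decompositions
  obtain ⟨e₀, s, hse, hsfe₀⟩ := Nat.sq_mul_squarefree e
  obtain ⟨c₀, t, htc, hsfc₀⟩ := Nat.sq_mul_squarefree c
  have hspos : 0 < s := by
    rcases Nat.eq_zero_or_pos s with h | h
    · rw [h] at hse; simp at hse; omega
    · exact h
  have htpos : 0 < t := by
    rcases Nat.eq_zero_or_pos t with h | h
    · rw [h] at htc; simp at htc; omega
    · exact h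
  have he₀pos : 0 < e₀ := by
    rcases Nat.eq_zero_or_pos e₀ with h | h
    · rw [h] at hse; simp at hse; omega
    · exact h
  have hc₀pos : 0 < c₀ := by
    rcases Nat.eq_zero_or_pos c₀ with h | h
    · rw [h] at htc; simp at htc; omega
    · exact h
  set g := Nat.gcd d e₀ with hgdef
  have hgd : g ∣ d := Nat.gcd_dvd_left _ _
  have hge₀ : g ∣ e₀ := Nat.gcd_dvd_right _ _
  have hgpos : 0 < g := Nat.gcd_pos_of_pos_left _ hdpos
  set d₁ := d / g with hd₁def
  set e₁ := e₀ / g with he₁def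
  have hd₁ : g * d₁ = d := Nat.mul_div_cancel' hgd
  have he₁ : g * e₁ = e₀ := Nat.mul_div_cancel' hge₀
  have hd₁pos : 0 < d₁ := by
    rcases Nat.eq_zero_or_pos d₁ with h | h
    · rw [h, mul_zero] at hd₁; omega
    · exact h
  have he₁pos : 0 < e₁ := by
    rcases Nat.eq_zero_or_pos e₁ with h | h
    · rw [h, mul_zero] at he₁; omega
    · exact h
  -- divisibility chains
  have hd₁d : d₁ ∣ d := ⟨g, by rw [← hd₁]; ring⟩
  have hse' : s ∣ e := ⟨s * e₀, by rw [← hse]; ring⟩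
  have he₀e : e₀ ∣ e := ⟨s ^ 2, by rw [← hse]; ring⟩
  have he₁e₀ : e₁ ∣ e₀ := ⟨g, by rw [← he₁]; ring⟩
  have hc₀c : c₀ ∣ c := ⟨t ^ 2, by rw [← htc]; ring⟩
  have htc' : t ∣ c := ⟨t * c₀, by rw [← htc]; ring⟩
  have hen : e ∣ n := ⟨d, by rw [← hde]; ring⟩
  -- coprimality of c and n
  have hcn : Nat.Coprime c n := by
    have := Int.isCoprime_iff_gcd_eq_one.mp hccop
    rwa [Int.gcd_eq_natAbs_gcd_natAbs, Int.natAbs_natCast] at this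
  -- no odd prime divides both d and e
  have hnotboth : ∀ p : ℕ, p.Prime → p ≠ 2 → p ∣ d → p ∣ e → False := by
    intro p pp hp2 hpd hpe
    have : p * p ∣ n := hde ▸ mul_dvd_mul hpd hpe
    exact no_odd_sq hDfund pp hp2 (hndef ▸ this)
  -- squarefree pieces
  have hsfg : Squarefree g := hdsf.squarefree_of_dvd hgd
  have hcop_g_d₁ : Nat.Coprime g d₁ := by
    have := hd₁ ▸ hdsf
    exact (Nat.squarefree_mul_iff.mp this).1
  have hsfd₁ : Squarefree d₁ := hdsf.squarefree_of_dvd hd₁d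
  have hcop_g_e₁ : Nat.Coprime g e₁ := by
    have := he₁ ▸ hsfe₀
    exact (Nat.squarefree_mul_iff.mp this).1
  have hsfe₁ : Squarefree e₁ := hsfe₀.squarefree_of_dvd he₁e₀
  have hcop_d₁_e₁ : Nat.Coprime d₁ e₁ := by
    refine Nat.coprime_of_dvd fun p pp hpd₁ hpe₁ => ?_
    have hpg : p ∣ g := Nat.dvd_gcd (hpd₁.trans hd₁d) (hpe₁.trans he₁e₀)
    have : p ∣ 1 := hcop_g_d₁ ▸ Nat.dvd_gcd hpg hpd₁
    exact pp.ne_one (Nat.dvd_one.mp this)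
  -- coprimality with c₀ and g
  have hcop_c_div : ∀ m : ℕ, m ∣ n → Nat.Coprime c₀ m := fun m hm =>
    (hcn.coprime_dvd_right hm).coprime_dvd_left hc₀c
  have hcop_c₀_g : Nat.Coprime c₀ g := hcop_c_div g (hgd.trans hdn)
  have hcop_c₀_d₁ : Nat.Coprime c₀ d₁ := hcop_c_div d₁ (hd₁d.trans hdn)
  have hcop_c₀_e₁ : Nat.Coprime c₀ e₁ := hcop_c_div e₁ ((he₁e₀.trans he₀e).trans hen)
  -- the big squarefree product
  have hsfprod : Squarefree (d₁ * e₁ * (c₀ * g)) := by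
    rw [Nat.squarefree_mul_iff]
    refine ⟨?_, ?_, ?_⟩
    · exact Nat.Coprime.mul
        (Nat.Coprime.mul_right hcop_c₀_d₁.symm hcop_g_d₁.symm)
        (Nat.Coprime.mul_right hcop_c₀_e₁.symm hcop_g_e₁.symm)
    · rw [Nat.squarefree_mul_iff]
      exact ⟨hcop_d₁_e₁, hsfd₁, hsfe₁⟩
    · rw [Nat.squarefree_mul_iff]
      exact ⟨hcop_c₀_g, hsfc₀, hsfg⟩
  -- helper facts for the local conditions
  have hc_e_eq : c * e = e₁ * (c₀ * g) * (t * s) ^ 2 := by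
    rw [← htc, ← hse, ← he₁]; ring
  have hc_d_eq : c * d = d₁ * (c₀ * g) * t ^ 2 := by
    rw [← htc, ← hd₁]; ring
  have hn_eq : n = d₁ * e₁ * (g * s) ^ 2 := by
    rw [← hde, ← hd₁, ← hse, ← he₁]; ring
  -- the three Legendre conditions
  have condA : ∀ p : ℕ, p.Prime → p ∣ d₁ → IsSquare ((e₁ * (c₀ * g) : ℕ) : ZMod p) := by
    intro p pp hpd₁
    rcases eq_or_ne p 2 with rfl | hp2
    · exact zmod2_isSquare _
    haveI : Fact p.Prime := ⟨pp⟩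
    have hpd : p ∣ d := hpd₁.trans hd₁d
    have h1' := h1 p pp hp2 (Int.natCast_dvd_natCast.mpr hpd)
    have hdiv : -(c : ℤ) * D / (d : ℤ) = ((c * e : ℕ) : ℤ) := by
      rw [hDde]
      push_cast
      rw [show -(c : ℤ) * -((d : ℤ) * e) = (d : ℤ) * ((c : ℤ) * e) by ring]
      rw [Int.mul_ediv_cancel_left _ hd0]
    rw [hdiv] at h1'
    have hts0 : ((t * s : ℕ) : ZMod p) ≠ 0 := by
      rw [Ne, ZMod.natCast_eq_zero_iff]
      intro hcon
      rcases (pp.dvd_mul.mp hcon) with hpt | hps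
      · have hpc : p ∣ c := hpt.trans htc'
        have : p ∣ 1 := hcn ▸ Nat.dvd_gcd hpc (hpd.trans hdn)
        exact pp.ne_one (Nat.dvd_one.mp this)
      · exact hnotboth p pp hp2 hpd (hps.trans hse')
    refine isSquare_of_mul_sq _ ((t * s : ℕ) : ZMod p) hts0 ?_
    have hrw : (((c * e : ℕ) : ℤ) : ZMod p)
        = ((e₁ * (c₀ * g) : ℕ) : ZMod p) * ((t * s : ℕ) : ZMod p) ^ 2 := by
      rw [hc_e_eq]; push_cast; ring
    rwa [hrw] at h1'
  have condB : ∀ p : ℕ, p.Prime → p ∣ e₁ → IsSquare ((d₁ * (c₀ * g) : ℕ) : ZMod p) := by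
    intro p pp hpe₁
    rcases eq_or_ne p 2 with rfl | hp2
    · exact zmod2_isSquare _
    haveI : Fact p.Prime := ⟨pp⟩
    have hpe : p ∣ e := (hpe₁.trans he₁e₀).trans he₀e
    have hdivE : -D / (d : ℤ) = ((e : ℕ) : ℤ) := by
      rw [hDde]
      rw [show -(-((d : ℤ) * e)) = (d : ℤ) * (e : ℤ) by ring]
      rw [Int.mul_ediv_cancel_left _ hd0]
    have h2' := h2 p pp hp2 (by rw [hdivE]; exact Int.natCast_dvd_natCast.mpr hpe)
    have hceq : ((c : ℤ) * (d : ℤ)) = ((c * d : ℕ) : ℤ) := by push_cast; ring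
    rw [hceq] at h2'
    have ht0 : ((t : ℕ) : ZMod p) ≠ 0 := by
      rw [Ne, ZMod.natCast_eq_zero_iff]
      intro hcon
      have hpc : p ∣ c := hcon.trans htc'
      have : p ∣ 1 := hcn ▸ Nat.dvd_gcd hpc (hpe.trans hen)
      exact pp.ne_one (Nat.dvd_one.mp this)
    refine isSquare_of_mul_sq _ ((t : ℕ) : ZMod p) ht0 ?_
    have hrw : (((c * d : ℕ) : ℤ) : ZMod p)
        = ((d₁ * (c₀ * g) : ℕ) : ZMod p) * ((t : ℕ) : ZMod p) ^ 2 := by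
      rw [hc_d_eq]; push_cast; ring
    rwa [hrw] at h2'
  have condC : ∀ p : ℕ, p.Prime → p ∣ c₀ * g →
      IsSquare ((-((d₁ : ℤ) * (e₁ : ℤ)) : ℤ) : ZMod p) := by
    intro p pp hpcg
    rcases eq_or_ne p 2 with rfl | hp2
    · exact zmod2_isSquare _
    haveI : Fact p.Prime := ⟨pp⟩
    rcases pp.dvd_mul.mp hpcg with hpc₀ | hpg
    · have hpc : p ∣ c := hpc₀.trans hc₀c
      have hsqD := hcsq p pp hpc
      have hgs0 : ((g * s : ℕ) : ZMod p) ≠ 0 := by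
        rw [Ne, ZMod.natCast_eq_zero_iff]
        intro hcon
        have hgsn : p ∣ n := by
          rcases (pp.dvd_mul.mp hcon) with hpg | hps
          · exact (hpg.trans hgd).trans hdn
          · exact (hps.trans hse').trans hen
        have : p ∣ 1 := hcn ▸ Nat.dvd_gcd hpc hgsn
        exact pp.ne_one (Nat.dvd_one.mp this)
      refine isSquare_of_mul_sq _ ((g * s : ℕ) : ZMod p) hgs0 ?_
      have hDcast : ((D : ℤ) : ZMod p)
          = ((-((d₁ : ℤ) * (e₁ : ℤ)) : ℤ) : ZMod p) * ((g * s : ℕ) : ZMod p) ^ 2 := by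
        have hDn : D = -((n : ℕ) : ℤ) := by rw [hnD]; ring
        rw [hDn, hn_eq]
        push_cast
        ring
      rwa [hDcast] at hsqD
    · exfalso
      exact hnotboth p pp hp2 (hpg.trans hgd) ((hpg.trans hge₀).trans he₀e)
  -- apply Legendre's theorem
  obtain ⟨x, y, z, hz0, heq⟩ := legendre d₁ e₁ (c₀ * g) hd₁pos he₁pos
    (by positivity) hsfprod condA condB (fun p pp hp => by
      have hC := condC p pp hp
      have : ((-((d₁ : ℤ) * (e₁ : ℤ)) : ℤ) : ZMod p)
          = ((-((d₁ : ℕ) * (e₁ : ℕ) : ℤ)) : ZMod p) := by push_cast; ring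
      rwa [this] at hC)
  -- assemble the final solution
  refine ⟨(d : ℤ) * s * t * x, (t : ℤ) * y, (g : ℤ) * s * z, ?_, ?_⟩
  · have hgZ : ((g : ℕ) : ℤ) ≠ 0 := by exact_mod_cast hgpos.ne'
    have hsZ : ((s : ℕ) : ℤ) ≠ 0 := by exact_mod_cast hspos.ne'
    exact mul_ne_zero (mul_ne_zero hgZ hsZ) hz0
  · have hdZ : (d : ℤ) = (g : ℤ) * (d₁ : ℤ) := by exact_mod_cast hd₁.symm
    have hcZc : (c : ℤ) = (t : ℤ) ^ 2 * (c₀ : ℤ) := by exact_mod_cast htc.symm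
    have heZ : (e : ℤ) = (s : ℤ) ^ 2 * ((g : ℤ) * (e₁ : ℤ)) := by
      have : e = s ^ 2 * (g * e₁) := by rw [he₁, hse]
      exact_mod_cast this
    have heqZ : (d₁ : ℤ) * x ^ 2 + (e₁ : ℤ) * y ^ 2 = (c₀ : ℤ) * (g : ℤ) * z ^ 2 := by
      have : ((c₀ * g : ℕ) : ℤ) = (c₀ : ℤ) * (g : ℤ) := by push_cast; ring
      rw [← this]
      exact_mod_cast heq
    rw [hDde, hdZ, hcZc, heZ]
    linear_combination (-(g : ℤ) ^ 2 * (d₁ : ℤ) * (s : ℤ) ^ 2 * (t : ℤ) ^ 2) * heqZ
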